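/- Let S ⊂ [0,1] be a measurable set that is a union of two pieces S₁ ⊂ [0,a] and S₂ ⊂ [b,c] (0 ≤ a ≤ b ≤ c), and let S̃ = S₁ ∪ (S₂ - (b-a)). If t is a median of the uniform distribution on S with t ∈ [0,a], then t is also a median of the uniform distribution on S̃, and ∫_{S̃} |x - t| dx ≤ ∫_S |x - t| dx. -/
import Mathlib


open MeasureTheory

/-- Let `S = S₁ ∪ S₂` with `S₁ ⊂ [0,a]`, `S₂ ⊂ [b,c]` measurable of positive total measure, and
`S̃ = S₁ ∪ (S₂ - (b-a))`. If `t ∈ [0,a]` is a median of the uniform distribution on `S`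
(`|{x ∈ S : x ≤ t}| = |{x ∈ S : x ≥ t}|`), then `t` is also a median of the uniform distribution
on `S̃`, and `∫_{S̃} |x - t| dx ≤ ∫_S |x - t| dx`. -/
theorem stmt9 (a b c : ℝ) (h0a : 0 ≤ a) (hab : a ≤ b) (hbc : b ≤ c)
    (S₁ S₂ : Set ℝ) (hS₁m : MeasurableSet S₁) (hS₂m : MeasurableSet S₂)
    (hS₁ : S₁ ⊆ Set.Icc 0 a) (hS₂ : S₂ ⊆ Set.Icc b c)
    (hpos : 0 < volume (S₁ ∪ S₂)) (t : ℝ) (ht : t ∈ Set.Icc 0 a)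
    (hmed : volume {x ∈ S₁ ∪ S₂ | x ≤ t} = volume {x ∈ S₁ ∪ S₂ | t ≤ x}) :
    volume {x ∈ S₁ ∪ (fun x => x - (b - a)) '' S₂ | x ≤ t} =
      volume {x ∈ S₁ ∪ (fun x => x - (b - a)) '' S₂ | t ≤ x} ∧
    ∫ x in S₁ ∪ (fun x => x - (b - a)) '' S₂, |x - t| ≤ ∫ x in S₁ ∪ S₂, |x - t| := by
  obtain ⟨ht0, hta⟩ := ht
  set d : ℝ := b - a with hd
  have hd0 : 0 ≤ d := by simp [hd]; linarith
  set T : Set ℝ := (fun x => x - d) '' S₂ with hT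
  have hemb : MeasurableEmbedding (fun x : ℝ => x - d) :=
    (MeasurableEquiv.subRight d).measurableEmbedding
  have hTm : MeasurableSet T := hemb.measurableSet_image' hS₂m
  have hTsub : T ⊆ Set.Icc a (c - d) := by
    rintro x ⟨y, hy, rfl⟩
    obtain ⟨hy1, hy2⟩ := hS₂ hy
    constructor <;> simp [hd] <;> linarith
  have hvolT : volume T = volume S₂ := by
    have := (measurePreserving_sub_right volume d).measure_preimage hS₂m.nullMeasurableSet
    have himg : T = (fun x : ℝ => x + d) ⁻¹' S₂ := by
      ext x
      constructor
      · rintro ⟨y, hy, rfl⟩; simpa using hy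
      · intro hx; exact ⟨x + d, hx, by ring⟩
    rw [himg]
    simpa using (measurePreserving_add_right volume d).measure_preimage hS₂m.nullMeasurableSet
  -- null / degenerate pieces
  have n1 : volume {x ∈ S₂ | x ≤ t} = 0 := by
    apply measure_mono_null (t := Set.Icc b t)
    · rintro x ⟨hx, hxt⟩; exact ⟨(hS₂ hx).1, hxt⟩
    · rw [Real.volume_Icc]; simp; linarith
  have n2 : volume {x ∈ T | x ≤ t} = 0 := by
    apply measure_mono_null (t := Set.Icc a t)
    · rintro x ⟨hx, hxt⟩; exact ⟨(hTsub hx).1, hxt⟩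
    · rw [Real.volume_Icc]; simp; linarith
  have n3 : volume (S₁ ∩ S₂) = 0 := by
    apply measure_mono_null (t := Set.Icc b a)
    · rintro x ⟨hx1, hx2⟩; exact ⟨(hS₂ hx2).1, (hS₁ hx1).2⟩
    · rw [Real.volume_Icc]; simp; linarith
  have n4 : volume (S₁ ∩ T) = 0 := by
    apply measure_mono_null (t := Set.Icc a a)
    · rintro x ⟨hx1, hx2⟩; exact ⟨(hTsub hx2).1, (hS₁ hx1).2⟩
    · rw [Real.volume_Icc]; simp
  -- all points of S₂, T are ≥ t
  have e1 : {x ∈ S₂ | t ≤ x} = S₂ := by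
    ext x; simp only [Set.mem_setOf_eq, and_iff_left_iff_imp]
    intro hx; have := (hS₂ hx).1; linarith
  have e2 : {x ∈ T | t ≤ x} = T := by
    ext x; simp only [Set.mem_setOf_eq, and_iff_left_iff_imp]
    intro hx; have := (hTsub hx).1; linarith
  have sep_union : ∀ (A B : Set ℝ) (p : ℝ → Prop),
      {x ∈ A ∪ B | p x} = {x ∈ A | p x} ∪ {x ∈ B | p x} := by
    intro A B p; ext x; simp only [Set.mem_setOf_eq, Set.mem_union]; tauto
  -- median for S
  have hmedS : volume {x ∈ S₁ ∪ S₂ | x ≤ t} = volume {x ∈ S₁ | x ≤ t} := by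
    rw [sep_union]
    exact measure_congr (union_ae_eq_left_of_ae_eq_empty (ae_eq_empty.2 n1))
  have hmedS' : volume {x ∈ S₁ ∪ S₂ | t ≤ x} = volume {x ∈ S₁ | t ≤ x} + volume S₂ := by
    rw [sep_union, e1]
    refine measure_union₀ hS₂m.nullMeasurableSet ?_
    refine measure_mono_null ?_ n3
    rintro x ⟨⟨h1, _⟩, h2⟩; exact ⟨h1, h2⟩
  constructor
  · have l1 : volume {x ∈ S₁ ∪ T | x ≤ t} = volume {x ∈ S₁ | x ≤ t} := by
      rw [sep_union]
      exact measure_congr (union_ae_eq_left_of_ae_eq_empty (ae_eq_empty.2 n2))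
    have l2 : volume {x ∈ S₁ ∪ T | t ≤ x} = volume {x ∈ S₁ | t ≤ x} + volume T := by
      rw [sep_union, e2]
      refine measure_union₀ hTm.nullMeasurableSet ?_
      refine measure_mono_null ?_ n4
      rintro x ⟨⟨h1, _⟩, h2⟩; exact ⟨h1, h2⟩
    rw [l1, l2, hvolT, ← hmedS', ← hmed, hmedS]
  · -- integral part
    have hcont : Continuous fun x : ℝ => |x - t| :=
      continuous_abs.comp (continuous_id.sub continuous_const)
    have hIcc : IntegrableOn (fun x : ℝ => |x - t|) (Set.Icc 0 c) :=
      hcont.integrableOn_Icc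
    have iS₁ : IntegrableOn (fun x : ℝ => |x - t|) S₁ :=
      hIcc.mono_set (hS₁.trans (Set.Icc_subset_Icc le_rfl (by linarith)))
    have iS₂ : IntegrableOn (fun x : ℝ => |x - t|) S₂ :=
      hIcc.mono_set (hS₂.trans (Set.Icc_subset_Icc (by linarith) le_rfl))
    have iT : IntegrableOn (fun x : ℝ => |x - t|) T :=
      hIcc.mono_set (hTsub.trans (Set.Icc_subset_Icc h0a (by simp [hd]; linarith)))
    have hsplit1 : ∫ x in S₁ ∪ T, |x - t| = (∫ x in S₁, |x - t|) + ∫ x in T, |x - t| :=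
      integral_union_ae n4 hTm.nullMeasurableSet iS₁ iT
    have hsplit2 : ∫ x in S₁ ∪ S₂, |x - t| = (∫ x in S₁, |x - t|) + ∫ x in S₂, |x - t| :=
      integral_union_ae n3 hS₂m.nullMeasurableSet iS₁ iS₂
    have hchg : ∫ x in T, |x - t| = ∫ x in S₂, |x - d - t| :=
      (measurePreserving_sub_right volume d).setIntegral_image_emb hemb _ _
    have hmono : ∫ x in S₂, |x - d - t| ≤ ∫ x in S₂, |x - t| := by
      refine setIntegral_mono_on ?_ iS₂ hS₂m ?_
      · have hcont2 : Continuous fun x : ℝ => |x - d - t| :=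
          continuous_abs.comp (by continuity)
        exact hcont2.integrableOn_Icc.mono_set hS₂
      · intro x hx
        obtain ⟨hxb, _⟩ := hS₂ hx
        rw [abs_of_nonneg (by linarith : (0:ℝ) ≤ x - d - t),
          abs_of_nonneg (by linarith : (0:ℝ) ≤ x - t)]
        linarith
    calc ∫ x in S₁ ∪ T, |x - t| = (∫ x in S₁, |x - t|) + ∫ x in T, |x - t| := hsplit1
      _ = (∫ x in S₁, |x - t|) + ∫ x in S₂, |x - d - t| := by rw [hchg]
      _ ≤ (∫ x in S₁, |x - t|) + ∫ x in S₂, |x - t| := by linarith [hmono]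
      _ = ∫ x in S₁ ∪ S₂, |x - t| := hsplit2.symm
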